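/- Let k be a commutative noetherian domain and A a finitely generated unital k-algebra equipped with an anti-involution * (a k-linear map A → A with (ab)* = b*a* and (a*)* = a for all a,b ∈ A). Let M = ⊕_{i=1}^t A e_i be a faithful projective left A-module, where each e_i ∈ A is a nonzero idempotent with e_i* = e_i. Then the canonical ring homomorphism A → End_{End_A(M)}(M) (sending a to the map x ↦ a·x) is surjective if and only if for every pair of finitely generated projective left A-modules P₁, P₂ the natural map θ : Hom_A(P₁,P₂) → Hom_{End_A(M)}(Hom_A(M,P₁), Hom_A(M,P₂)), defined by θ(f)(h) = f ∘ h, is bijective. -/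

import Mathlib

/-- The left `A`-module `M = ⊕_{i=1}^t A e_i`, where `A e_i` is the left ideal of `A`
generated by `e_i` (i.e. the `A`-span of `{e_i}` inside the left regular module `A`). -/
def DCPModule (A : Type) [Ring A] {t : ℕ} (e : Fin t → A) : Type :=
  (i : Fin t) → (Submodule.span A ({e i} : Set A))

instance (A : Type) [Ring A] {t : ℕ} (e : Fin t → A) : AddCommGroup (DCPModule A e) :=
  inferInstanceAs (AddCommGroup ((i : Fin t) → (Submodule.span A ({e i} : Set A))))

instance (A : Type) [Ring A] {t : ℕ} (e : Fin t → A) : Module A (DCPModule A e) :=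
  inferInstanceAs (Module A ((i : Fin t) → (Submodule.span A ({e i} : Set A))))

variable {A : Type} [Ring A] {t : ℕ} {e : Fin t → A}

lemma dcp_add_apply (y z : DCPModule A e) (i : Fin t) : (y + z) i = y i + z i := rfl
lemma dcp_smul_apply (a : A) (y : DCPModule A e) (i : Fin t) : (a • y) i = a • y i := rfl

lemma dcp_mem_mul (he : ∀ i, e i * e i = e i) {i : Fin t} {x : A}
    (hx : x ∈ Submodule.span A ({e i} : Set A)) : x * e i = x := by
  obtain ⟨a, rfl⟩ := Submodule.mem_span_singleton.mp hx
  simp [smul_eq_mul, mul_assoc, he i]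

lemma dcp_coe_mul (he : ∀ i, e i * e i = e i) (x : DCPModule A e) (i : Fin t) :
    (x i : A) * e i = (x i : A) := dcp_mem_mul he (x i).2

def unitv (e : Fin t → A) (i : Fin t) : DCPModule A e :=
  Pi.single i ⟨e i, Submodule.mem_span_singleton_self _⟩

@[simp] lemma unitv_apply_self (i : Fin t) : ((unitv e i) i : A) = e i := by
  simp [unitv]

lemma unitv_apply_ne {i j : Fin t} (h : j ≠ i) : ((unitv e i) j : A) = 0 := by
  unfold unitv
  rw [Pi.single_eq_of_ne h]
  rfl

lemma dcp_sum_apply {ι : Type} (s : Finset ι) (g : ι → DCPModule A e) (j : Fin t) :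
    ((∑ i ∈ s, g i) j : A) = ∑ i ∈ s, ((g i) j : A) := by
  classical
  induction s using Finset.induction_on with
  | empty => rfl
  | insert _ _ h ih =>
    rw [Finset.sum_insert h, Finset.sum_insert h, dcp_add_apply, Submodule.coe_add, ih]

lemma dcp_eq_sum (he : ∀ i, e i * e i = e i) (y : DCPModule A e) :
    y = ∑ i, (y i : A) • unitv e i := by
  funext j
  apply Subtype.ext
  rw [dcp_sum_apply, Finset.sum_eq_single j]
  · rw [dcp_smul_apply, SetLike.val_smul, smul_eq_mul, unitv_apply_self, dcp_coe_mul he]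
  · intro i _ hij
    rw [dcp_smul_apply, SetLike.val_smul, smul_eq_mul, unitv_apply_ne (Ne.symm hij), mul_zero]
  · intro h; exact absurd (Finset.mem_univ j) h

section Phi
variable (σ : A →+ A)

def dcpPhi (x : DCPModule A e) : DCPModule A e →ₗ[A] A where
  toFun y := ∑ i, (y i : A) * σ (x i)
  map_add' y z := by
    rw [← Finset.sum_add_distrib]
    refine Finset.sum_congr rfl fun i _ => ?_
    rw [dcp_add_apply, Submodule.coe_add, add_mul]
  map_smul' a y := by
    simp only [RingHom.id_apply, smul_eq_mul, Finset.mul_sum]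
    refine Finset.sum_congr rfl fun i _ => ?_
    rw [dcp_smul_apply, SetLike.val_smul, smul_eq_mul, mul_assoc]

lemma dcpPhi_apply (x y : DCPModule A e) :
    dcpPhi σ x y = ∑ i, (y i : A) * σ (x i) := rfl

lemma dcpPhi_add (x x' : DCPModule A e) :
    dcpPhi σ (x + x') = dcpPhi σ x + dcpPhi σ x' := by
  ext y
  simp only [dcpPhi_apply, LinearMap.add_apply, ← Finset.sum_add_distrib]
  refine Finset.sum_congr rfl fun i _ => ?_
  rw [dcp_add_apply, Submodule.coe_add, map_add, mul_add]

lemma dcpPhi_unitv (x : DCPModule A e) (j : Fin t) :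
    dcpPhi σ x (unitv e j) = e j * σ (x j) := by
  rw [dcpPhi_apply, Finset.sum_eq_single j]
  · rw [unitv_apply_self]
  · intro i _ hij; rw [unitv_apply_ne hij, zero_mul]
  · intro h; exact absurd (Finset.mem_univ j) h

lemma dcpPhi_symm (hmul : ∀ x y : A, σ (x * y) = σ y * σ x)
    (hinvol : ∀ x : A, σ (σ x) = x) (x y : DCPModule A e) :
    σ (dcpPhi σ x y) = dcpPhi σ y x := by
  rw [dcpPhi_apply, map_sum, dcpPhi_apply]
  refine Finset.sum_congr rfl fun i _ => ?_
  rw [hmul, hinvol]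

lemma dcp_h_unitv (hidem : ∀ i, e i * e i = e i) {P : Type} [AddCommGroup P] [Module A P]
    (h : DCPModule A e →ₗ[A] P) (i : Fin t) :
    h (unitv e i) = e i • h (unitv e i) := by
  have huv : unitv e i = e i • unitv e i := by
    funext j
    apply Subtype.ext
    rw [dcp_smul_apply, SetLike.val_smul, smul_eq_mul]
    by_cases hj : j = i
    · subst hj; rw [unitv_apply_self, hidem]
    · rw [unitv_apply_ne hj, mul_zero]
  conv_lhs => rw [huv, map_smul]

def dcpPsi (hmul : ∀ x y : A, σ (x * y) = σ y * σ x)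
    (hstar : ∀ i, σ (e i) = e i) (hidem : ∀ i, e i * e i = e i)
    (h : DCPModule A e →ₗ[A] A) : DCPModule A e := fun i =>
  ⟨σ (h (unitv e i)), by
    refine Submodule.mem_span_singleton.mpr ⟨σ (h (unitv e i)), ?_⟩
    rw [smul_eq_mul]
    conv_rhs => rw [dcp_h_unitv hidem h i, smul_eq_mul, hmul, hstar]⟩

section Keys
variable (hmul : ∀ x y : A, σ (x * y) = σ y * σ x)
  (hinvol : ∀ x : A, σ (σ x) = x)
  (hstar : ∀ i, σ (e i) = e i)
  (hidem : ∀ i, e i * e i = e i)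

lemma dcpPsi_coe (h : DCPModule A e →ₗ[A] A) (i : Fin t) :
    ((dcpPsi σ hmul hstar hidem h i : A)) = σ (h (unitv e i)) := rfl

include hinvol in
lemma dcpPsi_phi (x : DCPModule A e) : dcpPsi σ hmul hstar hidem (dcpPhi σ x) = x := by
  funext i
  apply Subtype.ext
  rw [dcpPsi_coe, dcpPhi_unitv, hmul, hinvol, hstar, dcp_coe_mul hidem]

include hinvol in
lemma dcpPhi_psi (h : DCPModule A e →ₗ[A] A) : dcpPhi σ (dcpPsi σ hmul hstar hidem h) = h := by
  ext y
  rw [dcpPhi_apply]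
  conv_rhs => rw [dcp_eq_sum hidem y, map_sum]
  refine Finset.sum_congr rfl fun i _ => ?_
  rw [dcpPsi_coe, hinvol, map_smul, smul_eq_mul]

lemma dcpPsi_add (h h' : DCPModule A e →ₗ[A] A) :
    dcpPsi σ hmul hstar hidem (h + h') =
      dcpPsi σ hmul hstar hidem h + dcpPsi σ hmul hstar hidem h' := by
  funext i
  apply Subtype.ext
  rw [dcp_add_apply, Submodule.coe_add, dcpPsi_coe, dcpPsi_coe, dcpPsi_coe,
    LinearMap.add_apply, map_add]

include hmul in
lemma dcpPhi_smul (a : A) (x y : DCPModule A e) :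
    dcpPhi σ (a • x) y = dcpPhi σ x y * σ a := by
  rw [dcpPhi_apply, dcpPhi_apply, Finset.sum_mul]
  refine Finset.sum_congr rfl fun i _ => ?_
  rw [dcp_smul_apply, SetLike.val_smul, smul_eq_mul, hmul, mul_assoc]

/-- the dagger anti-involution on End_A(M) -/
def dcpDag (hmul : ∀ x y : A, σ (x * y) = σ y * σ x)
    (hinvol : ∀ x : A, σ (σ x) = x)
    (hstar : ∀ i, σ (e i) = e i) (hidem : ∀ i, e i * e i = e i)
    (s : Module.End A (DCPModule A e)) : Module.End A (DCPModule A e) where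
  toFun x := dcpPsi σ hmul hstar hidem ((dcpPhi σ x).comp s)
  map_add' x x' := by
    simp only [dcpPhi_add, LinearMap.add_comp, dcpPsi_add]
  map_smul' a x := by
    simp only [RingHom.id_apply]
    funext i
    apply Subtype.ext
    rw [dcpPsi_coe, dcp_smul_apply, SetLike.val_smul, smul_eq_mul, dcpPsi_coe,
      LinearMap.comp_apply, LinearMap.comp_apply, dcpPhi_smul σ hmul, hmul, hinvol]

lemma dcpPhi_dag (s : Module.End A (DCPModule A e)) (x : DCPModule A e) :
    dcpPhi σ (dcpDag σ hmul hinvol hstar hidem s x) = (dcpPhi σ x).comp s :=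
  dcpPhi_psi σ hmul hinvol hstar hidem _

/-- Φ x (s† y) = Φ (s x) y -/
lemma dcpPhi_apply_dag (s : Module.End A (DCPModule A e)) (x y : DCPModule A e) :
    dcpPhi σ x (dcpDag σ hmul hinvol hstar hidem s y) = dcpPhi σ (s x) y := by
  rw [← hinvol (dcpPhi σ x (dcpDag σ hmul hinvol hstar hidem s y)),
    dcpPhi_symm σ hmul hinvol, dcpPhi_dag, LinearMap.comp_apply,
    dcpPhi_symm σ hmul hinvol]

/-- Φ (s x) = Φ x ∘ s† -/
lemma dcpPhi_smul_end (s : Module.End A (DCPModule A e)) (x : DCPModule A e) :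
    dcpPhi σ (s x) = (dcpPhi σ x).comp (dcpDag σ hmul hinvol hstar hidem s) := by
  ext y
  rw [LinearMap.comp_apply, dcpPhi_apply_dag]

/-- Ψ (h ∘ s†) = s (Ψ h) -/
lemma dcpPsi_comp_dag (s : Module.End A (DCPModule A e)) (h : DCPModule A e →ₗ[A] A) :
    dcpPsi σ hmul hstar hidem (h.comp (dcpDag σ hmul hinvol hstar hidem s)) =
      s (dcpPsi σ hmul hstar hidem h) := by
  have h1 : dcpPhi σ (s (dcpPsi σ hmul hstar hidem h)) =
      h.comp (dcpDag σ hmul hinvol hstar hidem s) := by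
    rw [dcpPhi_smul_end σ hmul hinvol hstar hidem, dcpPhi_psi σ hmul hinvol hstar hidem]
  rw [← h1, dcpPsi_phi σ hmul hinvol hstar hidem]
end Keys
end Phi

lemma dcp_zero_coe (i : Fin t) : (((0 : DCPModule A e) i : A)) = 0 := rfl

section Main
variable (σ : A →+ A)
  (hmul : ∀ x y : A, σ (x * y) = σ y * σ x)
  (hinvol : ∀ x : A, σ (σ x) = x)
  (hstar : ∀ i, σ (e i) = e i)
  (hidem : ∀ i, e i * e i = e i)

include hmul hinvol hstar in
/-- A torsion element killed by all `e i * b` is zero, for `P` projective. -/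
lemma dcp_torsion_zero
    (hfaithful : ∀ a : A, (∀ x : DCPModule A e, a • x = 0) → a = 0)
    {P : Type} [AddCommGroup P] [Module A P] [Module.Projective A P]
    (m : P) (hm : ∀ (i : Fin t) (b : A), (e i * b) • m = 0) : m = 0 := by
  obtain ⟨s, hs⟩ := (Module.projective_def'.mp ‹Module.Projective A P›)
  have hsm : s m = 0 := by
    ext q
    rw [Finsupp.zero_apply]
    set c := s m q with hc
    have hqc : ∀ (i : Fin t) (b : A), e i * b * c = 0 := by
      intro i b
      have h1 : s ((e i * b) • m) = 0 := by rw [hm, map_zero]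
      rw [map_smul] at h1
      have h2 := congrArg (fun v => v q) h1
      simpa [Finsupp.smul_apply, smul_eq_mul, ← hc] using h2
    have hσc : σ c = 0 := by
      refine hfaithful _ fun x => ?_
      funext i
      apply Subtype.ext
      rw [dcp_smul_apply, SetLike.val_smul, smul_eq_mul, dcp_zero_coe]
      obtain ⟨a, ha⟩ := Submodule.mem_span_singleton.mp (x i).2
      rw [← ha, smul_eq_mul]
      have h0 := congrArg σ (hqc i (σ a))
      rw [map_zero, hmul, hmul, hinvol, hstar] at h0
      exact h0
    rw [← hinvol c, hσc, map_zero]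
  have h2 := congrArg (fun F : P →ₗ[A] P => F m) hs
  simp only [LinearMap.comp_apply, LinearMap.id_apply] at h2
  rw [hsm, map_zero] at h2
  exact h2.symm

include hmul hinvol hstar in
/-- injectivity of θ: if `f ∘ h = 0` for all `h : M → P₁` then `f = 0`. -/
lemma dcp_theta_inj
    (hfaithful : ∀ a : A, (∀ x : DCPModule A e, a • x = 0) → a = 0)
    {P₁ P₂ : Type} [AddCommGroup P₁] [AddCommGroup P₂] [Module A P₁] [Module A P₂]
    [Module.Projective A P₂]
    (f : P₁ →ₗ[A] P₂) (hf : ∀ h : DCPModule A e →ₗ[A] P₁, f.comp h = 0) : f = 0 := by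
  ext p
  rw [LinearMap.zero_apply]
  refine dcp_torsion_zero σ hmul hinvol hstar hfaithful _ fun i b => ?_
  set hmap : DCPModule A e →ₗ[A] P₁ :=
    { toFun := fun x => ((x i : A) * b) • p
      map_add' := fun x y => by
        show ((((x + y) i : A)) * b) • p = (((x i : A)) * b) • p + (((y i : A)) * b) • p
        rw [dcp_add_apply, Submodule.coe_add, add_mul, add_smul]
      map_smul' := fun a x => by
        show ((((a • x) i : A)) * b) • p = a • ((((x i : A)) * b) • p)
        rw [dcp_smul_apply, SetLike.val_smul, smul_eq_mul, mul_assoc, mul_smul] } with hmapdef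
  have h0 : f (hmap (unitv e i)) = 0 := by rw [← LinearMap.comp_apply, hf, LinearMap.zero_apply]
  have heq : hmap (unitv e i) = (e i * b) • p := by
    rw [hmapdef]
    show ((((unitv e i) i : A)) * b) • p = (e i * b) • p
    rw [unitv_apply_self]
  rw [heq, map_smul] at h0
  exact h0

include hmul hinvol hstar hidem in
/-- surjectivity of θ for `P₁ = P₂ = A`, given the double centralizer property. -/
lemma dcp_surjAA
    (hD : ∀ g : DCPModule A e →+ DCPModule A e,
        (∀ (s : Module.End A (DCPModule A e)) (x : DCPModule A e), g (s x) = s (g x)) →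
        ∃ a : A, ∀ x : DCPModule A e, g x = a • x)
    (G : (DCPModule A e →ₗ[A] A) →+ (DCPModule A e →ₗ[A] A))
    (hG : ∀ (s : Module.End A (DCPModule A e)) (h : DCPModule A e →ₗ[A] A),
        G (h.comp s) = (G h).comp s) :
    ∃ f : A →ₗ[A] A, ∀ h : DCPModule A e →ₗ[A] A, f.comp h = G h := by
  set g : DCPModule A e →+ DCPModule A e :=
    AddMonoidHom.mk' (fun x => dcpPsi σ hmul hstar hidem (G (dcpPhi σ x)))
      (fun x y => by
        show dcpPsi σ hmul hstar hidem (G (dcpPhi σ (x + y))) =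
          dcpPsi σ hmul hstar hidem (G (dcpPhi σ x)) +
            dcpPsi σ hmul hstar hidem (G (dcpPhi σ y))
        rw [dcpPhi_add, map_add, dcpPsi_add]) with hgdef
  have hgcomm : ∀ (s : Module.End A (DCPModule A e)) (x : DCPModule A e),
      g (s x) = s (g x) := by
    intro s x
    rw [hgdef]
    simp only [AddMonoidHom.mk'_apply]
    rw [dcpPhi_smul_end σ hmul hinvol hstar hidem s x, hG, dcpPsi_comp_dag]
  obtain ⟨a, ha⟩ := hD g hgcomm
  refine ⟨LinearMap.toSpanSingleton A A (σ a), fun h => ?_⟩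
  have key : G h = dcpPhi σ (a • dcpPsi σ hmul hstar hidem h) := by
    have h1 : g (dcpPsi σ hmul hstar hidem h) = dcpPsi σ hmul hstar hidem (G h) := by
      rw [hgdef]
      simp only [AddMonoidHom.mk'_apply]
      rw [dcpPhi_psi σ hmul hinvol hstar hidem]
    have h2 : dcpPsi σ hmul hstar hidem (G h) = a • dcpPsi σ hmul hstar hidem h := by
      rw [← h1, ha]
    rw [← dcpPhi_psi σ hmul hinvol hstar hidem (G h), h2]
  ext y
  rw [LinearMap.comp_apply, LinearMap.toSpanSingleton_apply, key, dcpPhi_smul σ hmul,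
    dcpPhi_psi σ hmul hinvol hstar hidem, smul_eq_mul]
end Main

/-- Lemma 1.5 in the paper. Let `k` be a commutative noetherian domain, `A` a
finitely generated unital `k`-algebra with an anti-involution `σ`, and `M = ⊕_{i=1}^t A e_i` a
faithful projective left `A`-module, where each `e_i` is a nonzero idempotent fixed by `σ`.
Then the canonical ring homomorphism `A → End_{End_A(M)}(M)` is surjective (i.e. every additive
endomorphism of `M` commuting with `End_A(M)` is given by the action of some `a : A`) if and only
if for all finitely generated projective left `A`-modules `P₁, P₂` the natural map
`θ : Hom_A(P₁,P₂) → Hom_{End_A(M)}(Hom_A(M,P₁), Hom_A(M,P₂))`, `θ(f)(h) = f ∘ h`, is bijective;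
here `Hom_{End_A(M)}` consists of the additive maps commuting with precomposition by `End_A(M)`. -/
theorem stmt_0
    (k : Type) [CommRing k] [IsDomain k] [IsNoetherianRing k]
    (A : Type) [Ring A] [Algebra k A] [Algebra.FiniteType k A]
    (σ : A →ₗ[k] A)
    (hσ_mul : ∀ x y : A, σ (x * y) = σ y * σ x)
    (hσ_invol : ∀ x : A, σ (σ x) = x)
    (t : ℕ) (e : Fin t → A)
    (he_ne : ∀ i, e i ≠ 0)
    (he_idem : ∀ i, e i * e i = e i)
    (he_star : ∀ i, σ (e i) = e i)
    (hproj : Module.Projective A (DCPModule A e))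
    (hfaithful : ∀ a : A, (∀ x : DCPModule A e, a • x = 0) → a = 0) :
    ((∀ g : DCPModule A e →+ DCPModule A e,
        (∀ (s : Module.End A (DCPModule A e)) (x : DCPModule A e), g (s x) = s (g x)) →
        ∃ a : A, ∀ x : DCPModule A e, g x = a • x)
      ↔
      ∀ (P₁ P₂ : Type) [AddCommGroup P₁] [AddCommGroup P₂] [Module A P₁] [Module A P₂]
        [Module.Finite A P₁] [Module.Finite A P₂]
        [Module.Projective A P₁] [Module.Projective A P₂],
        Function.Bijective
          (fun f : P₁ →ₗ[A] P₂ =>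
            (⟨AddMonoidHom.mk' (fun h : DCPModule A e →ₗ[A] P₁ => f.comp h)
                (fun h₁ h₂ => by ext x; simp),
              fun s h => by ext x; simp⟩ :
              { g : (DCPModule A e →ₗ[A] P₁) →+ (DCPModule A e →ₗ[A] P₂) //
                ∀ (s : Module.End A (DCPModule A e)) (h : DCPModule A e →ₗ[A] P₁),
                  g (h.comp s) = (g h).comp s }))) := by
  classical
  set σ' : A →+ A := σ.toAddMonoidHom with hσ'def
  have hmul : ∀ x y : A, σ' (x * y) = σ' y * σ' x := hσ_mul
  have hinvol : ∀ x : A, σ' (σ' x) = x := hσ_invol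
  have hstar : ∀ i, σ' (e i) = e i := he_star
  constructor
  · -- double centralizer property implies θ bijective on f.g. projectives
    intro hD P₁ P₂ _ _ _ _ _ _ _ _
    constructor
    · -- injectivity
      intro f₁ f₂ hff
      have h12 : ∀ h : DCPModule A e →ₗ[A] P₁, f₁.comp h = f₂.comp h := by
        intro h
        have h1 := congrArg Subtype.val hff
        exact DFunLike.congr_fun h1 h
      have hsub : (f₁ - f₂) = 0 :=
        dcp_theta_inj σ' hmul hinvol hstar hfaithful _
          (fun h => by rw [LinearMap.sub_comp, h12, sub_self])
      exact sub_eq_zero.mp hsub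
    · -- surjectivity
      rintro ⟨G, hG⟩
      obtain ⟨n, π₁, hπ₁⟩ := Module.Finite.exists_fin' A P₁
      obtain ⟨ι₁, hι₁⟩ := Module.projective_lifting_property π₁ LinearMap.id hπ₁
      obtain ⟨m, π₂, hπ₂⟩ := Module.Finite.exists_fin' A P₂
      obtain ⟨ι₂, hι₂⟩ := Module.projective_lifting_property π₂ LinearMap.id hπ₂
      have hcomp : ∀ (l : Fin m) (j : Fin n), ∃ f : A →ₗ[A] A,
          ∀ h : DCPModule A e →ₗ[A] A, f.comp h =
            (LinearMap.proj l).comp (ι₂.comp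
              (G ((π₁.comp (LinearMap.single A (fun _ => A) j)).comp h))) := by
        intro l j
        refine dcp_surjAA σ' hmul hinvol hstar he_idem hD
          (AddMonoidHom.mk' (fun h => (LinearMap.proj l).comp (ι₂.comp
            (G ((π₁.comp (LinearMap.single A (fun _ => A) j)).comp h)))) ?_) ?_
          |>.imp fun f hf h => hf h
        · intro h h'
          simp only [LinearMap.comp_add, map_add]
        · intro s h
          simp only [AddMonoidHom.mk'_apply, ← LinearMap.comp_assoc, hG]
      choose F hF using hcomp
      set Fmap : (Fin n → A) →ₗ[A] (Fin m → A) :=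
        LinearMap.pi (fun l => ∑ j, (F l j).comp (LinearMap.proj j)) with hFmapdef
      refine ⟨(π₂.comp Fmap).comp ι₁, Subtype.ext (AddMonoidHom.ext fun h => ?_)⟩
      show ((π₂.comp Fmap).comp ι₁).comp h = G h
      have claim : ∀ h' : DCPModule A e →ₗ[A] (Fin n → A),
          Fmap.comp h' = ι₂.comp (G (π₁.comp h')) := by
        intro h'
        have hsum : (∑ j, ((π₁.comp (LinearMap.single A (fun _ => A) j)).comp
            ((LinearMap.proj j).comp h'))) = π₁.comp h' := by
          ext x
          rw [LinearMap.sum_apply]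
          have : ∀ j, ((π₁.comp (LinearMap.single A (fun _ => A) j)).comp
              ((LinearMap.proj j).comp h')) x = π₁ (Pi.single j (h' x j)) := by
            intro j
            simp [LinearMap.comp_apply]
          rw [Finset.sum_congr rfl fun j _ => this j, ← map_sum,
            Finset.univ_sum_single (h' x)]
          rfl
        refine LinearMap.ext fun x => funext fun l => ?_
        have lhs1 : (Fmap.comp h') x l = ∑ j, F l j (h' x j) := by
          rw [LinearMap.comp_apply, hFmapdef, LinearMap.pi_apply, LinearMap.sum_apply]
          simp [LinearMap.comp_apply]
        rw [lhs1]
        have term : ∀ j, F l j (h' x j) =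
            ι₂ (G ((π₁.comp (LinearMap.single A (fun _ => A) j)).comp
              ((LinearMap.proj j).comp h')) x) l := by
          intro j
          have h1 := congrArg (fun (u : DCPModule A e →ₗ[A] A) => u x)
            (hF l j ((LinearMap.proj j).comp h'))
          simpa [LinearMap.comp_apply] using h1
        rw [Finset.sum_congr rfl fun j _ => term j]
        have : ∑ j, ι₂ (G ((π₁.comp (LinearMap.single A (fun _ => A) j)).comp
            ((LinearMap.proj j).comp h')) x) l =
            ι₂ ((∑ j, G ((π₁.comp (LinearMap.single A (fun _ => A) j)).comp
              ((LinearMap.proj j).comp h'))) x) l := by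
          rw [LinearMap.sum_apply, map_sum, Finset.sum_apply]
        rw [this, ← map_sum, hsum]
        rfl
      rw [LinearMap.comp_assoc, LinearMap.comp_assoc, claim (ι₁.comp h),
        show π₁ ∘ₗ ι₁ ∘ₗ h = h from by rw [← LinearMap.comp_assoc, hι₁, LinearMap.id_comp],
        ← LinearMap.comp_assoc, hι₂, LinearMap.id_comp]
  · -- θ bijective implies double centralizer property
    intro hF g hg
    have hbij := hF A A
    have hv : ∀ (s : Module.End A (DCPModule A e)) (h : DCPModule A e →ₗ[A] A),
        dcpPhi σ' (g (dcpPsi σ' hmul hstar he_idem (h.comp s))) =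
          (dcpPhi σ' (g (dcpPsi σ' hmul hstar he_idem h))).comp s := by
      intro s h
      have h1 : dcpPsi σ' hmul hstar he_idem (h.comp s) =
          dcpDag σ' hmul hinvol hstar he_idem s (dcpPsi σ' hmul hstar he_idem h) := by
        show _ = dcpPsi σ' hmul hstar he_idem
          ((dcpPhi σ' (dcpPsi σ' hmul hstar he_idem h)).comp s)
        rw [dcpPhi_psi σ' hmul hinvol hstar he_idem]
      rw [h1, hg (dcpDag σ' hmul hinvol hstar he_idem s), dcpPhi_dag]
    obtain ⟨f, hf⟩ := hbij.2
      ⟨AddMonoidHom.mk' (fun h => dcpPhi σ' (g (dcpPsi σ' hmul hstar he_idem h)))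
        (fun h h' => by
          show dcpPhi σ' (g (dcpPsi σ' hmul hstar he_idem (h + h'))) = _
          rw [dcpPsi_add, map_add, dcpPhi_add]), hv⟩
    have hfh : ∀ h : DCPModule A e →ₗ[A] A,
        f.comp h = dcpPhi σ' (g (dcpPsi σ' hmul hstar he_idem h)) := by
      intro h
      have h1 := congrArg Subtype.val hf
      exact DFunLike.congr_fun h1 h
    refine ⟨σ' (f 1), fun x => ?_⟩
    have h1 : f.comp (dcpPhi σ' x) = dcpPhi σ' (g x) := by
      rw [hfh, dcpPsi_phi σ' hmul hinvol hstar he_idem]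
    have h2 : g x = dcpPsi σ' hmul hstar he_idem (f.comp (dcpPhi σ' x)) := by
      rw [h1, dcpPsi_phi σ' hmul hinvol hstar he_idem]
    rw [h2]
    funext i
    apply Subtype.ext
    rw [dcpPsi_coe, dcp_smul_apply, SetLike.val_smul, smul_eq_mul, LinearMap.comp_apply]
    have hfu : ∀ u : A, f u = u * f 1 := by
      intro u
      conv_lhs => rw [← mul_one u, ← smul_eq_mul, map_smul, smul_eq_mul]
    rw [hfu, hmul]
    congr 1
    rw [dcpPhi_unitv, hmul, hinvol, hstar, dcp_coe_mul he_idem]
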